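/- Let ρ ≥ 0 and x ∈ ℝ^M. Then sup_{δ : ‖δ‖₁ ≤ ρ} c_kᵀ z²(x + δ) ≤ inf_{t ∈ [0,1]^r} max_{m ∈ {1,…,M}} max{ g²_{k,m}(t, x, ρ), g²_{k,m}(t, x, −ρ) }, where g¹_m(x, a) = a W¹ e_m + W¹ x + b¹ (a ∈ ℝ, e_m the m-th standard basis vector of ℝ^M) and g²_{k,m}(t, x, a) = [c_kᵀ W²]⁺ [g¹_m(x, a)]⁺ − [−c_kᵀ W²]⁺ ( g¹_m(x, a) ⊙ t ) + c_kᵀ b². -/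

import Mathlib

/-- `c_k := e_k - e_y`. -/
def cVec {K : ℕ} (y k : Fin K) : Fin K → ℝ :=
  fun i => (if i = k then 1 else 0) - (if i = y then 1 else 0)

/-- `g¹_m(x, a) = a W¹ e_m + W¹ x + b¹`. -/
def gOne {M r : ℕ} (W1 : Fin r → Fin M → ℝ) (b1 : Fin r → ℝ) (x : Fin M → ℝ)
    (a : ℝ) (m : Fin M) : Fin r → ℝ :=
  fun j => a * W1 j m + ((∑ i', W1 j i' * x i') + b1 j)

/-- `g²_{k,m}(t, x, a) = [c_kᵀ W²]⁺ [g¹_m(x,a)]⁺ - [-c_kᵀ W²]⁺ (g¹_m(x,a) ⊙ t) + c_kᵀ b²`. -/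
def gTwo {M K r : ℕ} (W1 : Fin r → Fin M → ℝ) (W2 : Fin K → Fin r → ℝ)
    (b1 : Fin r → ℝ) (b2 : Fin K → ℝ) (y k : Fin K) (t : Fin r → ℝ)
    (x : Fin M → ℝ) (a : ℝ) (m : Fin M) : ℝ :=
  (∑ j, max (∑ i, cVec y k i * W2 i j) 0 * max (gOne W1 b1 x a m j) 0)
    - (∑ j, max (-(∑ i, cVec y k i * W2 i j)) 0 * (gOne W1 b1 x a m j * t j))
    + ∑ i, cVec y k i * b2 i

/-- Convex-combination weights representing `δ` in the `ℓ¹` ball of radius `ρ`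
as a combination of the vertices `±ρ e_m`. -/
lemma weights_exist {M : ℕ} (hM : 0 < M) (ρ : ℝ) (hρ : 0 ≤ ρ) (δ : Fin M → ℝ)
    (hδ : ∑ i, |δ i| ≤ ρ) :
    ∃ w : Fin M × Bool → ℝ, (∀ i, 0 ≤ w i) ∧ (∑ i, w i = 1) ∧
      ∀ m, ρ * (w (m, true) - w (m, false)) = δ m := by
  have hMR : (0:ℝ) < 2 * M := by positivity
  by_cases h0 : ρ = 0
  · have hδ0 : ∀ i, δ i = 0 := by
      intro i
      have h1 : |δ i| ≤ 0 := le_trans (Finset.single_le_sum (f := fun i => |δ i|)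
        (fun i _ => abs_nonneg _) (Finset.mem_univ i)) (h0 ▸ hδ)
      exact abs_eq_zero.mp (le_antisymm h1 (abs_nonneg _))
    refine ⟨fun _ => 1 / (2 * M), fun i => by positivity, ?_, fun m => by
      rw [h0, hδ0]; ring⟩
    rw [Finset.sum_const]
    simp only [Finset.card_univ, Fintype.card_prod, Fintype.card_fin, Fintype.card_bool,
      nsmul_eq_mul]
    field_simp
    push_cast
    ring
  · have hρpos : 0 < ρ := lt_of_le_of_ne hρ (Ne.symm h0)
    set c : ℝ := (1 - (∑ i, |δ i|) / ρ) / (2 * M) with hc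
    have hc0 : 0 ≤ c := by
      apply div_nonneg _ (le_of_lt hMR)
      have := (div_le_one hρpos).mpr hδ
      linarith
    refine ⟨fun i => (if i.2 then max (δ i.1) 0 else max (-δ i.1) 0) / ρ + c, ?_, ?_, ?_⟩
    · intro i
      have h2 : 0 ≤ (if i.2 then max (δ i.1) 0 else max (-δ i.1) 0) := by
        split <;> exact le_max_right _ _
      exact add_nonneg (div_nonneg h2 hρ) hc0
    · rw [Fintype.sum_prod_type]
      have h3 : ∀ m : Fin M, ∑ s : Bool,
          ((if s then max (δ m) 0 else max (-δ m) 0) / ρ + c) = |δ m| / ρ + 2 * c := by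
        intro m
        rw [Fintype.sum_bool]
        simp only [if_true, Bool.false_eq_true, if_false]
        have := max_zero_add_max_neg_zero_eq_abs_self (δ m)
        field_simp
        linarith [this]
      rw [Finset.sum_congr rfl fun m _ => h3 m, Finset.sum_add_distrib, ← Finset.sum_div,
        Finset.sum_const, Finset.card_univ, Fintype.card_fin, nsmul_eq_mul, hc]
      field_simp
      ring
    · intro m
      simp only [if_true, Bool.false_eq_true, if_false]
      have h4 : max (δ m) 0 - max (-δ m) 0 = δ m := max_zero_sub_max_neg_zero_eq_self (δ m)
      field_simp
      linarith [h4]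

/-- Jensen-type step: the objective at a convex combination is at most the bound `B`
dominating the objective at each vertex. -/
lemma main_aux {r : ℕ} {ι : Type*} [Fintype ι]
    (p q t : Fin r → ℝ) (hp : ∀ j, 0 ≤ p j) (hq : ∀ j, 0 ≤ q j)
    (A : ι → Fin r → ℝ) (w : ι → ℝ) (hw0 : ∀ i, 0 ≤ w i) (hw1 : ∑ i, w i = 1)
    (N : Fin r → ℝ) (hN : ∀ j, N j = ∑ i, w i * A i j)
    (C B : ℝ)
    (hB : ∀ i, (∑ j, p j * max (A i j) 0) - (∑ j, q j * (A i j * t j)) + C ≤ B) :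
    (∑ j, p j * max (N j) 0) - (∑ j, q j * (N j * t j)) + C ≤ B := by
  have key : (∑ j, p j * max (N j) 0) - (∑ j, q j * (N j * t j)) + C
      ≤ ∑ i, w i * ((∑ j, p j * max (A i j) 0) - (∑ j, q j * (A i j * t j)) + C) := by
    have e1 : ∑ i, w i * ((∑ j, p j * max (A i j) 0) - (∑ j, q j * (A i j * t j)) + C)
        = (∑ j, p j * ∑ i, w i * max (A i j) 0) - (∑ j, q j * (N j * t j)) + C := by
      have eP : ∑ i, w i * ∑ j, p j * max (A i j) 0
          = ∑ j, p j * ∑ i, w i * max (A i j) 0 := by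
        simp only [Finset.mul_sum]
        rw [Finset.sum_comm]
        exact Finset.sum_congr rfl fun j _ => Finset.sum_congr rfl fun i _ => by ring
      have eQ : ∑ i, w i * ∑ j, q j * (A i j * t j)
          = ∑ j, q j * (N j * t j) := by
        simp only [Finset.mul_sum]
        rw [Finset.sum_comm]
        refine Finset.sum_congr rfl fun j _ => ?_
        rw [hN j, Finset.sum_mul, Finset.mul_sum]
        exact Finset.sum_congr rfl fun i _ => by ring
      have eC : ∑ i, w i * C = C := by rw [← Finset.sum_mul, hw1, one_mul]
      simp only [mul_sub, mul_add]
      rw [Finset.sum_add_distrib, Finset.sum_sub_distrib, eP, eQ, eC]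
    rw [e1]
    have hmax : ∀ j, max (N j) 0 ≤ ∑ i, w i * max (A i j) 0 := by
      intro j
      apply max_le
      · rw [hN j]
        exact Finset.sum_le_sum fun i _ =>
          mul_le_mul_of_nonneg_left (le_max_left _ _) (hw0 i)
      · exact Finset.sum_nonneg fun i _ => mul_nonneg (hw0 i) (le_max_right _ _)
    have : ∑ j, p j * max (N j) 0 ≤ ∑ j, p j * ∑ i, w i * max (A i j) 0 :=
      Finset.sum_le_sum fun j _ => mul_le_mul_of_nonneg_left (hmax j) (hp j)
    linarith
  refine le_trans key ?_
  calc ∑ i, w i * ((∑ j, p j * max (A i j) 0) - (∑ j, q j * (A i j * t j)) + C)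
      ≤ ∑ i, w i * B :=
        Finset.sum_le_sum fun i _ => mul_le_mul_of_nonneg_left (hB i) (hw0 i)
    _ = B := by rw [← Finset.sum_mul, hw1, one_mul]

/-- Theorem 3 (two-layer case): the `L₁`-robust objective is upper bounded by
`inf_{t ∈ [0,1]^r} max_{m} max{g²_{k,m}(t, x, ρ), g²_{k,m}(t, x, -ρ)}`. -/
theorem statement7 (M K r : ℕ) (hM : 0 < M)
    (W1 : Fin r → Fin M → ℝ) (W2 : Fin K → Fin r → ℝ)
    (b1 : Fin r → ℝ) (b2 : Fin K → ℝ) (y k : Fin K)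
    (ρ : ℝ) (hρ : 0 ≤ ρ) (x : Fin M → ℝ) :
    (⨆ δ ∈ {δ : Fin M → ℝ | ∑ i, |δ i| ≤ ρ},
        ((∑ i, cVec y k i *
            ((∑ j, W2 i j * max ((∑ i', W1 j i' * (x + δ) i') + b1 j) 0) + b2 i) : ℝ) : EReal)) ≤
      ⨅ t ∈ Set.Icc (0 : Fin r → ℝ) 1, ⨆ m : Fin M,
        ((max (gTwo W1 W2 b1 b2 y k t x ρ m) (gTwo W1 W2 b1 b2 y k t x (-ρ) m) : ℝ) : EReal) := by
  haveI : Nonempty (Fin M) := ⟨⟨0, hM⟩⟩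
  refine iSup₂_le fun δ hδ => le_iInf₂ fun t ht => ?_
  have hδ' : ∑ i, |δ i| ≤ ρ := hδ
  set u : Fin r → ℝ := fun j => ∑ i, cVec y k i * W2 i j with hu
  set z : Fin r → ℝ := fun j => (∑ i', W1 j i' * x i') + b1 j with hz
  set C : ℝ := ∑ i, cVec y k i * b2 i with hC
  set p : Fin r → ℝ := fun j => max (u j) 0 with hp
  set q : Fin r → ℝ := fun j => max (-(u j)) 0 with hq
  set N : Fin r → ℝ := fun j => z j + ∑ i', W1 j i' * δ i' with hNdef
  set φ : Fin M → ℝ := fun m =>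
    max (gTwo W1 W2 b1 b2 y k t x ρ m) (gTwo W1 W2 b1 b2 y k t x (-ρ) m) with hφ
  have hne : (Finset.univ : Finset (Fin M)).Nonempty := Finset.univ_nonempty
  obtain ⟨m₀, -, hm₀⟩ := Finset.exists_mem_eq_sup' hne φ
  set B : ℝ := Finset.univ.sup' hne φ with hB
  -- the weights
  obtain ⟨w, hw0, hw1, hsgn⟩ := weights_exist hM ρ hρ δ hδ'
  set A : Fin M × Bool → Fin r → ℝ :=
    fun i j => (if i.2 then ρ else -ρ) * W1 j i.1 + z j with hA
  have hNA : ∀ j, N j = ∑ i, w i * A i j := by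
    intro j
    rw [hA]
    rw [Fintype.sum_prod_type]
    have h5 : ∀ m : Fin M, ∑ s : Bool, w (m, s) * ((if s then ρ else -ρ) * W1 j m + z j)
        = W1 j m * δ m + (w (m, true) + w (m, false)) * z j := by
      intro m
      rw [Fintype.sum_bool]
      simp only [if_true, Bool.false_eq_true, if_false]
      linear_combination W1 j m * hsgn m
    rw [Finset.sum_congr rfl fun m _ => h5 m, Finset.sum_add_distrib]
    have h6 : ∑ m, (w (m, true) + w (m, false)) * z j = z j := by
      rw [← Finset.sum_mul]
      have : ∑ m, (w (m, true) + w (m, false)) = ∑ i, w i := by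
        rw [Fintype.sum_prod_type]
        exact Finset.sum_congr rfl fun m _ => by rw [Fintype.sum_bool]
      rw [this, hw1, one_mul]
    rw [h6]
    simp only [hNdef]
    ring
  -- gTwo at vertices
  have hg : ∀ (i : Fin M × Bool),
      (∑ j, p j * max (A i j) 0) - (∑ j, q j * (A i j * t j)) + C
        = gTwo W1 W2 b1 b2 y k t x (if i.2 then ρ else -ρ) i.1 := by
    intro i
    rfl
  have hBub : ∀ i : Fin M × Bool,
      (∑ j, p j * max (A i j) 0) - (∑ j, q j * (A i j * t j)) + C ≤ B := by
    intro i
    rw [hg i]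
    have h7 : gTwo W1 W2 b1 b2 y k t x (if i.2 then ρ else -ρ) i.1 ≤ φ i.1 := by
      rcases i with ⟨m, s⟩
      cases s
      · exact le_max_right _ _
      · exact le_max_left _ _
    exact le_trans h7 (Finset.le_sup' φ (Finset.mem_univ i.1))
  have hconv : (∑ j, p j * max (N j) 0) - (∑ j, q j * (N j * t j)) + C ≤ B :=
    main_aux p q t (fun j => le_max_right _ _) (fun j => le_max_right _ _)
      A w hw0 hw1 N hNA C B hBub
  -- Step A: rewrite and bound the objective at δ
  have harg : ∀ j, (∑ i', W1 j i' * (x + δ) i') + b1 j = N j := by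
    intro j
    simp only [Pi.add_apply, mul_add, Finset.sum_add_distrib, hNdef, hz]
    ring
  have hf : (∑ i, cVec y k i *
        ((∑ j, W2 i j * max ((∑ i', W1 j i' * (x + δ) i') + b1 j) 0) + b2 i))
      = ∑ j, u j * max (N j) 0 + C := by
    simp only [harg]
    calc ∑ i, cVec y k i * ((∑ j, W2 i j * max (N j) 0) + b2 i)
        = ∑ i, ((∑ j, cVec y k i * (W2 i j * max (N j) 0)) + cVec y k i * b2 i) := by
          exact Finset.sum_congr rfl fun i _ => by rw [mul_add, Finset.mul_sum]
      _ = (∑ i, ∑ j, cVec y k i * (W2 i j * max (N j) 0)) + C := by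
          rw [Finset.sum_add_distrib, hC]
      _ = (∑ j, ∑ i, cVec y k i * (W2 i j * max (N j) 0)) + C := by rw [Finset.sum_comm]
      _ = ∑ j, u j * max (N j) 0 + C := by
          congr 1
          refine Finset.sum_congr rfl fun j _ => ?_
          rw [hu, Finset.sum_mul]
          exact Finset.sum_congr rfl fun i _ => by ring
  have hub : ∑ j, u j * max (N j) 0 + C
      ≤ (∑ j, p j * max (N j) 0) - (∑ j, q j * (N j * t j)) + C := by
    have hterm : ∀ j, u j * max (N j) 0 ≤ p j * max (N j) 0 - q j * (N j * t j) := by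
      intro j
      have hsplit : p j - q j = u j := max_zero_sub_max_neg_zero_eq_self (u j)
      have hNt : N j * t j ≤ max (N j) 0 := by
        rcases le_or_gt 0 (N j) with h | h
        · calc N j * t j ≤ N j * 1 := mul_le_mul_of_nonneg_left (ht.2 j) h
            _ = N j := mul_one _
            _ ≤ max (N j) 0 := le_max_left _ _
        · exact le_trans (mul_nonpos_of_nonpos_of_nonneg h.le (ht.1 j)) (le_max_right _ _)
      have hq0 : 0 ≤ q j := le_max_right _ _
      have he : u j * max (N j) 0 = p j * max (N j) 0 - q j * max (N j) 0 := by
        rw [← hsplit]; ring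
      have h8 := mul_le_mul_of_nonneg_left hNt hq0
      linarith
    have := Finset.sum_le_sum fun j (_ : j ∈ Finset.univ) => hterm j
    rw [Finset.sum_sub_distrib] at this
    linarith
  have hfinal : (∑ i, cVec y k i *
        ((∑ j, W2 i j * max ((∑ i', W1 j i' * (x + δ) i') + b1 j) 0) + b2 i)) ≤ φ m₀ := by
    rw [hf, ← hm₀]
    exact le_trans hub hconv
  calc ((∑ i, cVec y k i *
        ((∑ j, W2 i j * max ((∑ i', W1 j i' * (x + δ) i') + b1 j) 0) + b2 i) : ℝ) : EReal)
      ≤ ((φ m₀ : ℝ) : EReal) := EReal.coe_le_coe_iff.mpr hfinal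
    _ ≤ ⨆ m : Fin M, ((φ m : ℝ) : EReal) := le_iSup (fun m => ((φ m : ℝ) : EReal)) m₀
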